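/- Let G be a 2-connected graph of even order with an even 2-cut C, and let G₁, G₂ be its marked C-components with marker edges e₁, e₂. Then for any perfect matching M of G, either M ∩ C = ∅ and M ∩ E(Gᵢ) is a perfect matching of Gᵢ for each i, or M ⊇ C and (M ∩ E(Gᵢ)) + eᵢ is a perfect matching of Gᵢ for each i. -/

import Mathlib

noncomputable section
open scoped Classical

/-- The underlying simple graph of a multigraph given by `ends`. -/
def toSimple {V E : Type} (ends : E → Sym2 V) : SimpleGraph V where
  Adj u w := u ≠ w ∧ ∃ e, ends e = s(u, w)
  symm := by
    constructor
    rintro u w ⟨hne, e, he⟩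
    exact ⟨hne.symm, e, by rw [he]; exact Sym2.eq_swap⟩
  loopless := by constructor; rintro u ⟨hne, -⟩; exact hne rfl

/-- The edge cut `∂(X)`. -/
def Cut {V E : Type} (ends : E → Sym2 V) (X : Set V) : Set E :=
  {e | ∃ u ∈ X, ∃ w, w ∉ X ∧ ends e = s(u, w)}

/-- Degree of a vertex (counting multiplicities). -/
noncomputable def deg {V E : Type} (ends : E → Sym2 V) (v : V) : ℕ :=
  {e | v ∈ ends e}.ncard

/-- A perfect matching: every vertex is incident with exactly one edge of `M`. -/
def IsPM {V E : Type} (ends : E → Sym2 V) (M : Set E) : Prop :=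
  ∀ v : V, ∃! e, e ∈ M ∧ v ∈ ends e

/-- Push a vertex of `X` into the subtype `↥X` (default `a` off `X`). -/
noncomputable def restrVert {V : Type} (X : Set V) (a : ↥X) (v : V) : ↥X :=
  if h : v ∈ X then ⟨v, h⟩ else a

/-- The marked `C`-component of a multigraph on the shore `X`: its vertices are
those of `X`, its edges are the edges with both ends in `X` together with one
extra marker edge joining `a` and `b` (the ends in `X` of the two cut edges). -/
noncomputable def markedEnds {V E : Type} (ends : E → Sym2 V) (X : Set V)
    (a b : ↥X) : ({e : E // ∀ v ∈ ends e, v ∈ X} ⊕ Unit) → Sym2 ↥X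
  | Sum.inl e => (ends e.val).map (restrVert X a)
  | Sum.inr _ => s(a, b)

/-- The restriction of an edge set `M` of `G` to a marked component on shore `X`;
the marker edge is included according to `marker`. -/
def restrM {V E : Type} (ends : E → Sym2 V) (X : Set V) (M : Set E)
    (marker : Prop) : Set ({e : E // ∀ v ∈ ends e, v ∈ X} ⊕ Unit) :=
  {x | Sum.elim (fun e => e.val ∈ M) (fun _ => marker) x}

/-- `G` is 2-connected: connected and removing any single vertex leaves it
connected. -/
def TwoConnected {V E : Type} (ends : E → Sym2 V) : Prop :=
  (toSimple ends).Connected ∧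
    ∀ v : V, Set.Nonempty {w | w ≠ v} → ((toSimple ends).induce {w | w ≠ v}).Connected

-- auxiliary lemmas for stmt12

lemma mem_map_restr {V : Type} {X : Set V} (a : ↥X) {z : Sym2 V}
    (hz : ∀ v ∈ z, v ∈ X) {v : V} (hv : v ∈ X) :
    (⟨v, hv⟩ : ↥X) ∈ z.map (restrVert X a) ↔ v ∈ z := by
  constructor
  · intro h
    obtain ⟨y, hy, hyv⟩ := Sym2.mem_map.1 h
    have hyX := hz y hy
    rw [restrVert, dif_pos hyX] at hyv
    have : y = v := congrArg Subtype.val hyv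
    rwa [← this]
  · intro h
    exact Sym2.mem_map.2 ⟨v, h, by rw [restrVert, dif_pos hv]⟩

lemma cut_compl {V E : Type} (ends : E → Sym2 V) (X : Set V) :
    Cut ends Xᶜ = Cut ends X := by
  ext e
  constructor
  · rintro ⟨u, hu, w, hw, hew⟩
    exact ⟨w, by simpa using hw, u, by simpa using hu, hew.trans Sym2.eq_swap⟩
  · rintro ⟨u, hu, w, hw, hew⟩
    exact ⟨w, hw, u, by simpa using hu, hew.trans Sym2.eq_swap⟩

lemma inner_of_not_cut {V E : Type} {ends : E → Sym2 V} {X : Set V} {e : E}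
    (he : e ∉ Cut ends X) {v : V} (hv : v ∈ X) (hve : v ∈ ends e) :
    ∀ w ∈ ends e, w ∈ X := by
  obtain ⟨w, hw⟩ := Sym2.mem_iff_exists.1 hve
  have hwX : w ∈ X := by
    by_contra h
    exact he ⟨v, hv, w, h, hw⟩
  intro x hx
  rw [hw, Sym2.mem_iff] at hx
  rcases hx with rfl | rfl <;> assumption

lemma pm_restr_none {V E : Type} (ends : E → Sym2 V) (X : Set V) (a b : ↥X)
    (M : Set E) (hM : IsPM ends M)
    (hdisj : ∀ e ∈ M, e ∉ Cut ends X) :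
    IsPM (markedEnds ends X a b) (restrM ends X M False) := by
  rintro ⟨v, hv⟩
  obtain ⟨e, ⟨heM, hve⟩, huniq⟩ := hM v
  have hinner : ∀ w ∈ ends e, w ∈ X := inner_of_not_cut (hdisj e heM) hv hve
  refine ⟨Sum.inl ⟨e, hinner⟩, ⟨heM, ?_⟩, ?_⟩
  · show (⟨v, hv⟩ : ↥X) ∈ markedEnds ends X a b (Sum.inl ⟨e, hinner⟩)
    rw [markedEnds]
    exact (mem_map_restr a hinner hv).2 hve
  · rintro (⟨e', he'⟩ | u) ⟨hmem, hvmem⟩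
    · rw [markedEnds] at hvmem
      have hv' : v ∈ ends e' := (mem_map_restr a he' hv).1 hvmem
      have : e' = e := huniq e' ⟨hmem, hv'⟩
      subst this; rfl
    · exact absurd hmem (by simp [restrM])

lemma pm_restr_marker {V E : Type} (ends : E → Sym2 V) (X : Set V) {f f' : E}
    (hC : Cut ends X = {f, f'})
    (a b : ↥X) (ha : a.1 ∈ ends f) (hb : b.1 ∈ ends f')
    (ha' : ∀ v ∈ ends f, v ∈ X → v = a.1) (hb' : ∀ v ∈ ends f', v ∈ X → v = b.1)
    (M : Set E) (hM : IsPM ends M) (hfM : f ∈ M) (hf'M : f' ∈ M) :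
    IsPM (markedEnds ends X a b) (restrM ends X M True) := by
  have hfcut : f ∈ Cut ends X := by rw [hC]; exact Set.mem_insert _ _
  have hf'cut : f' ∈ Cut ends X := by rw [hC]; exact Set.mem_insert_of_mem _ rfl
  -- f and f' are not inner edges
  have hnotinner : ∀ (g : E), g ∈ Cut ends X → ¬ (∀ w ∈ ends g, w ∈ X) := by
    rintro g ⟨u, hu, w, hw, hew⟩ hall
    exact hw (hall w (by rw [hew]; exact Sym2.mem_mk_right u w))
  rintro ⟨v, hv⟩
  by_cases hva : v = a.1 ∨ v = b.1
  · refine ⟨Sum.inr (), ⟨trivial, ?_⟩, ?_⟩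
    · show (⟨v, hv⟩ : ↥X) ∈ markedEnds ends X a b (Sum.inr ())
      rw [markedEnds, Sym2.mem_iff]
      rcases hva with h | h
      · left; exact Subtype.ext h
      · right; exact Subtype.ext h
    · rintro (⟨e', he'⟩ | u) ⟨hmem, hvmem⟩
      · exfalso
        rw [markedEnds] at hvmem
        have hv' : v ∈ ends e' := (mem_map_restr a he' hv).1 hvmem
        rcases hva with h | h
        · subst h
          have : e' = f := (hM a.1).unique ⟨hmem, hv'⟩ ⟨hfM, ha⟩
          exact hnotinner f hfcut (this ▸ he')
        · subst h
          have : e' = f' := (hM b.1).unique ⟨hmem, hv'⟩ ⟨hf'M, hb⟩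
          exact hnotinner f' hf'cut (this ▸ he')
      · rfl
  · push_neg at hva
    obtain ⟨hva1, hva2⟩ := hva
    obtain ⟨e, ⟨heM, hve⟩, huniq⟩ := hM v
    have hef : e ≠ f := fun h => hva1 (ha' v (h ▸ hve) hv)
    have hef' : e ≠ f' := fun h => hva2 (hb' v (h ▸ hve) hv)
    have hecut : e ∉ Cut ends X := by
      rw [hC]; rintro (h | h) <;> [exact hef h; exact hef' h]
    have hinner : ∀ w ∈ ends e, w ∈ X := inner_of_not_cut hecut hv hve
    refine ⟨Sum.inl ⟨e, hinner⟩, ⟨heM, ?_⟩, ?_⟩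
    · show (⟨v, hv⟩ : ↥X) ∈ markedEnds ends X a b (Sum.inl ⟨e, hinner⟩)
      rw [markedEnds]
      exact (mem_map_restr a hinner hv).2 hve
    · rintro (⟨e', he'⟩ | u) ⟨hmem, hvmem⟩
      · rw [markedEnds] at hvmem
        have hv' : v ∈ ends e' := (mem_map_restr a he' hv).1 hvmem
        have : e' = e := huniq e' ⟨hmem, hv'⟩
        subst this; rfl
      · exfalso
        rw [markedEnds, Sym2.mem_iff] at hvmem
        rcases hvmem with h | h
        · exact hva1 (congrArg Subtype.val h)
        · exact hva2 (congrArg Subtype.val h)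

lemma cut_even {V E : Type} [Fintype V] [Fintype E]
    (ends : E → Sym2 V) (hloop : ∀ e, ¬ (ends e).IsDiag)
    (X : Set V) (hXeven : Even X.ncard)
    (M : Set E) (hM : IsPM ends M) :
    Even ((M ∩ Cut ends X).ncard) := by
  classical
  set m : V → E := fun v => (hM v).exists.choose with hmdef
  have hm1 : ∀ v, m v ∈ M ∧ v ∈ ends (m v) := fun v => (hM v).exists.choose_spec
  have hmap : ∀ v ∈ X.toFinset, m v ∈ M.toFinset := by
    intro v _
    simpa using (hm1 v).1
  have hcard := Finset.card_eq_sum_card_fiberwise hmap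
  have key : ∀ e ∈ M.toFinset,
      (((X.toFinset.filter (fun v => m v = e)).card : ZMod 2))
        = if e ∈ Cut ends X then 1 else 0 := by
    intro e he
    rw [Set.mem_toFinset] at he
    have hfe : X.toFinset.filter (fun v => m v = e)
        = X.toFinset.filter (fun v => v ∈ ends e) := by
      apply Finset.filter_congr
      intro v _
      constructor
      · rintro rfl; exact (hm1 v).2
      · intro hve; exact (hM v).unique (hm1 v) ⟨he, hve⟩
    rw [hfe]
    induction' hxy : ends e using Sym2.ind with x y
    have hne : x ≠ y := by
      have := hloop e
      rw [hxy, Sym2.mk_isDiag_iff] at this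
      exact this
    have hfilter : X.toFinset.filter (fun v => v ∈ s(x, y))
        = ({x, y} : Finset V).filter (fun v => v ∈ X) := by
      ext v
      simp [Sym2.mem_iff, and_comm]
    rw [hfilter]
    by_cases hx : x ∈ X <;> by_cases hy : y ∈ X
    · have h1 : ({x, y} : Finset V).filter (fun v => v ∈ X) = {x, y} := by
        rw [Finset.filter_eq_self]
        intro v hvv
        rcases Finset.mem_insert.1 hvv with rfl | hvv
        · exact hx
        · rw [Finset.mem_singleton] at hvv; subst hvv; exact hy
      have h2 : e ∉ Cut ends X := by
        rintro ⟨u, hu, w, hw, hew⟩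
        rw [hxy, Sym2.eq_iff] at hew
        rcases hew with ⟨rfl, rfl⟩ | ⟨rfl, rfl⟩
        · exact hw hy
        · exact hw hx
      rw [if_neg h2, h1, Finset.card_insert_of_notMem (by simpa using hne),
        Finset.card_singleton]
      show ((2 : ℕ) : ZMod 2) = 0
      decide
    · have h1 : ({x, y} : Finset V).filter (fun v => v ∈ X) = {x} := by
        ext v
        simp only [Finset.mem_filter, Finset.mem_insert, Finset.mem_singleton]
        constructor
        · rintro ⟨rfl | rfl, hvX⟩
          · rfl
          · exact absurd hvX hy
        · rintro rfl; exact ⟨Or.inl rfl, hx⟩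
      have h2 : e ∈ Cut ends X := ⟨x, hx, y, hy, hxy⟩
      rw [if_pos h2, h1, Finset.card_singleton, Nat.cast_one]
    · have h1 : ({x, y} : Finset V).filter (fun v => v ∈ X) = {y} := by
        ext v
        simp only [Finset.mem_filter, Finset.mem_insert, Finset.mem_singleton]
        constructor
        · rintro ⟨rfl | rfl, hvX⟩
          · exact absurd hvX hx
          · rfl
        · rintro rfl; exact ⟨Or.inr rfl, hy⟩
      have h2 : e ∈ Cut ends X := ⟨y, hy, x, hx, hxy.trans Sym2.eq_swap⟩
      rw [if_pos h2, h1, Finset.card_singleton, Nat.cast_one]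
    · have h1 : ({x, y} : Finset V).filter (fun v => v ∈ X) = ∅ := by
        rw [Finset.filter_eq_empty_iff]
        intro v hvv
        rcases Finset.mem_insert.1 hvv with rfl | hvv
        · exact hx
        · rw [Finset.mem_singleton] at hvv; subst hvv; exact hy
      have h2 : e ∉ Cut ends X := by
        rintro ⟨u, hu, w, hw, hew⟩
        rw [hxy, Sym2.eq_iff] at hew
        rcases hew with ⟨rfl, rfl⟩ | ⟨rfl, rfl⟩
        · exact hx hu
        · exact hy hu
      rw [if_neg h2, h1, Finset.card_empty, Nat.cast_zero]
  have hsum : ((X.toFinset.card : ZMod 2))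
      = ((M.toFinset.filter (fun e => e ∈ Cut ends X)).card : ZMod 2) := by
    rw [hcard, Nat.cast_sum, Finset.sum_congr rfl key, Finset.sum_boole]
  have hXzero : ((X.toFinset.card : ZMod 2)) = 0 := by
    rw [← Set.ncard_eq_toFinset_card']
    exact (ZMod.natCast_eq_zero_iff _ _).2 hXeven.two_dvd
  have hMC : (M ∩ Cut ends X).toFinset = M.toFinset.filter (fun e => e ∈ Cut ends X) := by
    ext e; simp
  rw [hXzero] at hsum
  have : (2 : ℕ) ∣ (M ∩ Cut ends X).ncard := by
    rw [Set.ncard_eq_toFinset_card', hMC]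
    exact (ZMod.natCast_eq_zero_iff _ _).1 hsum.symm
  exact even_iff_two_dvd.2 this


/-- Let `G` be a 2-connected loopless multigraph of even order with an even
2-cut `C = {f, f'} = ∂(X)`, and let `G₁`, `G₂` be its marked `C`-components
with marker edges `e₁`, `e₂`. Then for any perfect matching `M` of `G`, either
`M ∩ C = ∅` and `M ∩ E(Gᵢ)` is a perfect matching of `Gᵢ` for each `i`, or
`C ⊆ M` and `(M ∩ E(Gᵢ)) + eᵢ` is a perfect matching of `Gᵢ` for each `i`. -/
theorem stmt12 {V E : Type} [Fintype V] [Fintype E]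
    (ends : E → Sym2 V) (hloop : ∀ e, ¬ (ends e).IsDiag)
    (h2c : TwoConnected ends) (heven : Even (Fintype.card V))
    (X : Set V) (f f' : E) (hff : f ≠ f') (hC : Cut ends X = {f, f'})
    (hXeven : Even X.ncard)
    (u₁ u₂ v₁ v₂ : V) (hu₁ : u₁ ∈ X) (hu₂ : u₂ ∉ X) (hv₁ : v₁ ∈ X) (hv₂ : v₂ ∉ X)
    (hf : ends f = s(u₁, u₂)) (hf' : ends f' = s(v₁, v₂))
    (M : Set E) (hM : IsPM ends M) :
    (f ∉ M ∧ f' ∉ M ∧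
        IsPM (markedEnds ends X ⟨u₁, hu₁⟩ ⟨v₁, hv₁⟩) (restrM ends X M False) ∧
        IsPM (markedEnds ends Xᶜ ⟨u₂, hu₂⟩ ⟨v₂, hv₂⟩) (restrM ends Xᶜ M False)) ∨
      (f ∈ M ∧ f' ∈ M ∧
        IsPM (markedEnds ends X ⟨u₁, hu₁⟩ ⟨v₁, hv₁⟩) (restrM ends X M True) ∧
        IsPM (markedEnds ends Xᶜ ⟨u₂, hu₂⟩ ⟨v₂, hv₂⟩) (restrM ends Xᶜ M True)) := by
  have hpar : Even ((M ∩ Cut ends X).ncard) := cut_even ends hloop X hXeven M hM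
  have hiff : f ∈ M ↔ f' ∈ M := by
    constructor
    · intro hfM
      by_contra hf'M
      have hone : M ∩ Cut ends X = {f} := by
        rw [hC]
        ext e
        simp only [Set.mem_inter_iff, Set.mem_insert_iff, Set.mem_singleton_iff]
        constructor
        · rintro ⟨heM, rfl | rfl⟩
          · rfl
          · exact absurd heM hf'M
        · rintro rfl; exact ⟨hfM, Or.inl rfl⟩
      rw [hone, Set.ncard_singleton] at hpar
      simp at hpar
    · intro hf'M
      by_contra hfM
      have hone : M ∩ Cut ends X = {f'} := by
        rw [hC]
        ext e
        simp only [Set.mem_inter_iff, Set.mem_insert_iff, Set.mem_singleton_iff]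
        constructor
        · rintro ⟨heM, rfl | rfl⟩
          · exact absurd heM hfM
          · rfl
        · rintro rfl; exact ⟨hf'M, Or.inr rfl⟩
      rw [hone, Set.ncard_singleton] at hpar
      simp at hpar
  by_cases hfM : f ∈ M
  · right
    have hf'M := hiff.1 hfM
    refine ⟨hfM, hf'M, ?_, ?_⟩
    · refine pm_restr_marker ends X hC ⟨u₁, hu₁⟩ ⟨v₁, hv₁⟩ ?_ ?_ ?_ ?_ M hM hfM hf'M
      · show u₁ ∈ ends f; rw [hf]; exact Sym2.mem_mk_left _ _
      · show v₁ ∈ ends f'; rw [hf']; exact Sym2.mem_mk_left _ _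
      · intro v hve hvX
        rw [hf, Sym2.mem_iff] at hve
        rcases hve with rfl | rfl
        · rfl
        · exact absurd hvX hu₂
      · intro v hve hvX
        rw [hf', Sym2.mem_iff] at hve
        rcases hve with rfl | rfl
        · rfl
        · exact absurd hvX hv₂
    · refine pm_restr_marker ends Xᶜ (by rw [cut_compl]; exact hC)
        ⟨u₂, hu₂⟩ ⟨v₂, hv₂⟩ ?_ ?_ ?_ ?_ M hM hfM hf'M
      · show u₂ ∈ ends f; rw [hf]; exact Sym2.mem_mk_right _ _
      · show v₂ ∈ ends f'; rw [hf']; exact Sym2.mem_mk_right _ _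
      · intro v hve hvX
        rw [hf, Sym2.mem_iff] at hve
        rcases hve with rfl | rfl
        · exact absurd hu₁ hvX
        · rfl
      · intro v hve hvX
        rw [hf', Sym2.mem_iff] at hve
        rcases hve with rfl | rfl
        · exact absurd hv₁ hvX
        · rfl
  · left
    have hf'M : f' ∉ M := fun h => hfM (hiff.2 h)
    have hdisj : ∀ e ∈ M, e ∉ Cut ends X := by
      intro e he hcut
      rw [hC] at hcut
      simp only [Set.mem_insert_iff, Set.mem_singleton_iff] at hcut
      rcases hcut with rfl | rfl
      · exact hfM he
      · exact hf'M he
    exact ⟨hfM, hf'M, pm_restr_none ends X _ _ M hM hdisj,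
      pm_restr_none ends Xᶜ _ _ M hM (by rw [cut_compl]; exact hdisj)⟩
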